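/- arXiv:1910.11835 — 9 statements merged into one kernel-verified Lean document; each statement's English description precedes it below -/
import Mathlib

section
/- For all natural numbers m and n with gcd(m,n) = 1, one has a(m)·a(n) ≤ a(mn). -/
/-- The sum of the small divisors of `n`, i.e. the divisors `d` of `n` with `d^2 ≤ n`. -/
def smallDivSum (n : ℕ) : ℕ := ∑ d ∈ n.divisors.filter (fun d => d ^ 2 ≤ n), d

theorem smallDivSum_supermultiplicative (m n : ℕ) (h : Nat.gcd m n = 1) :
    smallDivSum m * smallDivSum n ≤ smallDivSum (m * n) := by
  unfold smallDivSum
  rw [Finset.sum_mul_sum]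
  set A := m.divisors.filter (fun d => d ^ 2 ≤ m) with hA
  set B := n.divisors.filter (fun d => d ^ 2 ≤ n) with hB
  have hinj : ∀ p ∈ A ×ˢ B, ∀ q ∈ A ×ˢ B,
      (fun p : ℕ × ℕ => p.1 * p.2) p = (fun p : ℕ × ℕ => p.1 * p.2) q → p = q := by
    rintro ⟨d1, e1⟩ hp ⟨d2, e2⟩ hq heq
    simp only [Finset.mem_product, hA, hB, Finset.mem_filter, Nat.mem_divisors] at hp hq
    obtain ⟨⟨⟨hd1, hm0⟩, _⟩, ⟨he1, _⟩, _⟩ := hp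
    obtain ⟨⟨⟨hd2, _⟩, _⟩, ⟨he2, _⟩, _⟩ := hq
    simp only at heq
    have hco12 : Nat.Coprime d1 e2 :=
      Nat.Coprime.coprime_dvd_right he2 (Nat.Coprime.coprime_dvd_left hd1 h)
    have hco21 : Nat.Coprime d2 e1 :=
      Nat.Coprime.coprime_dvd_right he1 (Nat.Coprime.coprime_dvd_left hd2 h)
    have hd12 : d1 ∣ d2 := (Nat.Coprime.dvd_of_dvd_mul_right hco12) ⟨e1, heq.symm⟩
    have hd21 : d2 ∣ d1 := (Nat.Coprime.dvd_of_dvd_mul_right hco21) ⟨e2, heq⟩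
    have hdd : d1 = d2 := Nat.dvd_antisymm hd12 hd21
    subst hdd
    have hd1pos : 0 < d1 := Nat.pos_of_dvd_of_pos hd1 (Nat.pos_of_ne_zero hm0)
    exact Prod.ext rfl (Nat.eq_of_mul_eq_mul_left hd1pos heq)
  calc ∑ i ∈ A, ∑ j ∈ B, i * j
      = ∑ p ∈ A ×ˢ B, p.1 * p.2 := by rw [Finset.sum_product]
    _ = ∑ d ∈ (A ×ˢ B).image (fun p : ℕ × ℕ => p.1 * p.2), d := by
        rw [Finset.sum_image hinj]
    _ ≤ ∑ d ∈ (m*n).divisors.filter (fun d => d ^ 2 ≤ m*n), d := by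
        apply Finset.sum_le_sum_of_subset
        intro x hx
        simp only [Finset.mem_image, Finset.mem_product, hA, hB, Finset.mem_filter,
          Nat.mem_divisors] at hx ⊢
        obtain ⟨⟨d, e⟩, ⟨⟨⟨hd, hm0⟩, hd2⟩, ⟨he, hn0⟩, he2⟩, rfl⟩ := hx
        refine ⟨⟨mul_dvd_mul hd he, mul_ne_zero hm0 hn0⟩, ?_⟩
        calc (d * e) ^ 2 = d ^ 2 * e ^ 2 := by ring
          _ ≤ m * n := Nat.mul_le_mul hd2 he2
end

section
/- There exists a constant C > 0 such that for all natural numbers n ≥ 2, |∑_{k=1}^{n} a(k) − (2/3)·n^{3/2}| ≤ C·n·log n. -/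
open Finset

lemma key (n : ℕ) :
    ∑ k ∈ Finset.Icc 1 n, smallDivSum k
      = ∑ d ∈ Finset.Icc 1 n.sqrt, d * (n / d + 1 - d) := by
  unfold smallDivSum
  have rhs : ∀ d ∈ Finset.Icc 1 n.sqrt, d * (n / d + 1 - d) = ∑ _m ∈ Finset.Icc d (n/d), d := by
    intro d hd
    rw [Finset.sum_const, Nat.card_Icc, smul_eq_mul, mul_comm]
  rw [Finset.sum_congr rfl rhs, Finset.sum_sigma' (Finset.Icc 1 n)
    (fun k => k.divisors.filter (fun d => d ^ 2 ≤ k)) (fun _ d => d),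
    Finset.sum_sigma' (Finset.Icc 1 n.sqrt) (fun d => Finset.Icc d (n/d)) (fun d _ => d)]
  refine Finset.sum_nbij' (fun p => ⟨p.2, p.1 / p.2⟩) (fun p => ⟨p.1 * p.2, p.1⟩) ?_ ?_ ?_ ?_ ?_
  · rintro ⟨k, d⟩ hp
    simp only [Finset.mem_sigma, Finset.mem_Icc, Nat.mem_divisors, Finset.mem_filter] at hp ⊢
    obtain ⟨⟨hk1, hkn⟩, ⟨hdk, hk0⟩, hd2⟩ := hp
    have hd0 : 0 < d := Nat.pos_of_dvd_of_pos hdk (by omega)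
    refine ⟨⟨hd0, Nat.le_sqrt.2 (by nlinarith [hd2, hkn])⟩, ?_, Nat.div_le_div_right hkn⟩
    · rw [Nat.le_div_iff_mul_le hd0]
      calc d * d = d ^ 2 := by ring
      _ ≤ k := hd2
  · rintro ⟨d, m⟩ hp
    simp only [Finset.mem_sigma, Finset.mem_Icc, Nat.mem_divisors, Finset.mem_filter] at hp ⊢
    obtain ⟨⟨hd1, hds⟩, hdm, hmn⟩ := hp
    have hdn : d * m ≤ n := by have := (Nat.le_div_iff_mul_le (show 0 < d by omega)).1 hmn; nlinarith
    refine ⟨⟨by nlinarith, by nlinarith [(Nat.le_div_iff_mul_le (show 0 < d by omega)).1 hmn]⟩, ⟨⟨m, rfl⟩, Nat.mul_ne_zero (by omega) (by omega)⟩, by nlinarith⟩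
  · rintro ⟨k, d⟩ hp
    simp only [Finset.mem_sigma, Nat.mem_divisors, Finset.mem_filter] at hp
    obtain ⟨_, ⟨hdk, _⟩, _⟩ := hp
    simp [Nat.mul_div_cancel' hdk]
  · rintro ⟨d, m⟩ hp
    simp only [Finset.mem_sigma, Finset.mem_Icc] at hp
    simp [Nat.mul_div_cancel_left _ (show 0 < d by omega)]
  · rintro ⟨k, d⟩ _; rfl

lemma sum_id_Icc (D : ℕ) : 2 * ∑ d ∈ Finset.Icc 1 D, d = D * (D + 1) := by
  induction D with
  | zero => simp
  | succ D ih => rw [Finset.sum_Icc_succ_top (by omega), Nat.mul_add, ih]; ring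

lemma sum_sq_Icc (D : ℕ) : 6 * ∑ d ∈ Finset.Icc 1 D, d ^ 2 = D * (D + 1) * (2 * D + 1) := by
  induction D with
  | zero => simp
  | succ D ih => rw [Finset.sum_Icc_succ_top (by omega), Nat.mul_add, ih]; ring

lemma claim2 (n : ℕ) (hn : 2 ≤ n) :
    |(n : ℝ) * (n.sqrt : ℝ) - (n.sqrt : ℝ)^3 / 3 - (2/3) * (Real.sqrt n)^3| ≤ (n : ℝ) := by
  set D : ℝ := (n.sqrt : ℝ) with hD
  set x : ℝ := Real.sqrt n with hx
  have hx2 : x ^ 2 = n := Real.sq_sqrt (by positivity)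
  have hx0 : 0 ≤ x := Real.sqrt_nonneg _
  have hn1 : (1:ℝ) ≤ n := by exact_mod_cast Nat.one_le_of_lt hn
  have hxn : x ≤ n := by nlinarith
  have hD0 : 0 ≤ D := by positivity
  have hDsq : D ^ 2 ≤ (n : ℝ) := by rw [hD]; exact_mod_cast Nat.sqrt_le' n
  have hDx : D ≤ x := by nlinarith
  have hnD : (n : ℝ) < (D + 1) ^ 2 := by
    have h := Nat.lt_succ_sqrt' n
    rw [hD, show ((n.sqrt:ℝ) + 1) ^ 2 = (((n.sqrt + 1) ^ 2 : ℕ) : ℝ) by push_cast; ring]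
    exact_mod_cast h
  have hxD : x < D + 1 := by nlinarith
  rw [abs_le]
  constructor <;> nlinarith [sq_nonneg (x - D), mul_nonneg hx0 (sq_nonneg (x - D))]

theorem smallDivSum_partial_sum_asymptotic :
    ∃ C : ℝ, 0 < C ∧ ∀ n : ℕ, 2 ≤ n →
      |(∑ k ∈ Finset.Icc 1 n, (smallDivSum k : ℝ)) - (2 / 3) * (n : ℝ) ^ ((3 : ℝ) / 2)|
        ≤ C * (n : ℝ) * Real.log n := by
  refine ⟨6, by norm_num, fun n hn => ?_⟩
  have hDs : 1 ≤ n.sqrt := Nat.le_sqrt.2 (by omega)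
  have hdiv : ∀ d ∈ Finset.Icc 1 n.sqrt, d ≤ n / d := by
    intro d hd
    rw [Finset.mem_Icc] at hd
    rw [Nat.le_div_iff_mul_le (by omega)]
    exact Nat.le_sqrt.1 hd.2
  -- cast the sum
  have hsum : (∑ k ∈ Finset.Icc 1 n, (smallDivSum k : ℝ))
      = ∑ d ∈ Finset.Icc 1 n.sqrt, ((d:ℝ) * (((n/d : ℕ):ℝ) + 1 - (d:ℝ))) := by
    rw [show (∑ k ∈ Finset.Icc 1 n, (smallDivSum k : ℝ))
        = ((∑ k ∈ Finset.Icc 1 n, smallDivSum k : ℕ) : ℝ) by push_cast; rfl, key,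
      Nat.cast_sum]
    refine Finset.sum_congr rfl fun d hd => ?_
    have h1 := hdiv d hd
    rw [Nat.cast_mul, Nat.cast_sub (by omega)]
    push_cast; ring
  set D : ℝ := (n.sqrt : ℝ) with hDdef
  set x : ℝ := Real.sqrt n with hxdef
  have hD1 : (1:ℝ) ≤ D := by rw [hDdef]; exact_mod_cast hDs
  have hcardD : (((Finset.Icc 1 n.sqrt).card : ℕ) : ℝ) = D := by
    rw [Nat.card_Icc, hDdef]; norm_cast
  have hDsq : D ^ 2 ≤ (n : ℝ) := by rw [hDdef]; exact_mod_cast Nat.sqrt_le' n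
  -- the three sums
  set S1 : ℝ := ∑ d ∈ Finset.Icc 1 n.sqrt, (d:ℝ) * ((n/d : ℕ):ℝ) with hS1def
  set S2 : ℝ := ∑ d ∈ Finset.Icc 1 n.sqrt, (d:ℝ) with hS2def
  set S3 : ℝ := ∑ d ∈ Finset.Icc 1 n.sqrt, (d:ℝ)^2 with hS3def
  have hsplit : (∑ d ∈ Finset.Icc 1 n.sqrt, ((d:ℝ) * (((n/d : ℕ):ℝ) + 1 - (d:ℝ))))
      = S1 + S2 - S3 := by
    rw [hS1def, hS2def, hS3def, ← Finset.sum_add_distrib, ← Finset.sum_sub_distrib]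
    exact Finset.sum_congr rfl fun d _ => by ring
  have h2 : 2 * S2 = D * (D + 1) := by
    have h := sum_id_Icc n.sqrt
    have h' : ((2 * ∑ d ∈ Finset.Icc 1 n.sqrt, d : ℕ) : ℝ)
        = ((n.sqrt * (n.sqrt + 1) : ℕ) : ℝ) := by exact_mod_cast h
    push_cast at h'
    rw [hS2def, hDdef]; linarith
  have h3 : 6 * S3 = D * (D + 1) * (2 * D + 1) := by
    have h := sum_sq_Icc n.sqrt
    have h' : ((6 * ∑ d ∈ Finset.Icc 1 n.sqrt, d ^ 2 : ℕ) : ℝ)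
        = ((n.sqrt * (n.sqrt + 1) * (2 * n.sqrt + 1) : ℕ) : ℝ) := by exact_mod_cast h
    push_cast at h'
    rw [hS3def, hDdef]; linarith
  -- bounds on S1
  have hS1eq : S1 = ∑ d ∈ Finset.Icc 1 n.sqrt, ((n:ℝ) - ((n % d : ℕ):ℝ)) := by
    rw [hS1def]
    refine Finset.sum_congr rfl fun d hd => ?_
    have := Nat.div_add_mod n d
    have : (d:ℝ) * ((n/d : ℕ):ℝ) + ((n % d : ℕ):ℝ) = (n:ℝ) := by exact_mod_cast this
    linarith
  have hS1u : S1 ≤ (n:ℝ) * D := by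
    rw [hS1eq]
    calc ∑ d ∈ Finset.Icc 1 n.sqrt, ((n:ℝ) - ((n % d : ℕ):ℝ))
        ≤ ∑ _d ∈ Finset.Icc 1 n.sqrt, (n:ℝ) := by
          refine Finset.sum_le_sum fun d _ => ?_
          have : (0:ℝ) ≤ ((n % d : ℕ):ℝ) := by positivity
          linarith
      _ = (n:ℝ) * D := by rw [Finset.sum_const, nsmul_eq_mul, hcardD]; ring
  have hS1l : (n:ℝ) * D - (n:ℝ) ≤ S1 := by
    rw [hS1eq, Finset.sum_sub_distrib, Finset.sum_const, nsmul_eq_mul, hcardD]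
    have hmod : ∑ d ∈ Finset.Icc 1 n.sqrt, ((n % d : ℕ):ℝ) ≤ D * D := by
      calc ∑ d ∈ Finset.Icc 1 n.sqrt, ((n % d : ℕ):ℝ)
          ≤ ∑ d ∈ Finset.Icc 1 n.sqrt, D := by
            refine Finset.sum_le_sum fun d hd => ?_
            rw [Finset.mem_Icc] at hd
            have h1 : n % d < d := Nat.mod_lt _ (by omega)
            have : ((n % d : ℕ):ℝ) < (d:ℝ) := by exact_mod_cast h1
            have : (d:ℝ) ≤ D := by rw [hDdef]; exact_mod_cast hd.2
            linarith
        _ = D * D := by rw [Finset.sum_const, nsmul_eq_mul, hcardD]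
    nlinarith [hDsq]
  -- claim 2
  have hc2 := claim2 n hn
  rw [abs_le] at hc2
  -- rpow to sqrt
  have hrpow : (n:ℝ) ^ ((3:ℝ)/2) = x ^ 3 := by
    rw [hxdef, show Real.sqrt (n:ℝ) = (n:ℝ) ^ ((1:ℝ)/2) from Real.sqrt_eq_rpow _,
      ← Real.rpow_natCast ((n:ℝ) ^ ((1:ℝ)/2)) 3, ← Real.rpow_mul (by positivity)]
    norm_num
  -- log bound
  have hn2 : (2:ℝ) ≤ (n:ℝ) := by exact_mod_cast hn
  have hlog : Real.log 2 ≤ Real.log n := Real.log_le_log (by norm_num) hn2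
  have hlog2 : (0.6931471803 : ℝ) < Real.log 2 := Real.log_two_gt_d9
  have hfin : (4:ℝ) * n ≤ 6 * (n:ℝ) * Real.log n := by nlinarith
  have hD0 : (0:ℝ) ≤ D := by linarith
  have hDD : D ≤ D ^ 2 := by nlinarith
  have hD3 : (0:ℝ) ≤ D ^ 3 := by positivity
  have hTu : (S1 + S2 - S3) - (2/3) * x ^ 3 ≤ 4 * (n:ℝ) := by
    linarith [hc2.2, hS1u, h2, h3, hDsq, hDD, hD3]
  have hTl : -(4 * (n:ℝ)) ≤ (S1 + S2 - S3) - (2/3) * x ^ 3 := by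
    linarith [hc2.1, hS1l, h2, h3, hDsq, hDD, hD3]
  rw [hsum, hsplit, hrpow, abs_le]
  constructor <;> linarith
end

section
/- The limit superior of the sequence a(n)/√n as n → ∞ equals +∞; that is, the sequence a(n)/√n is unbounded above. -/
open Filter

lemma sum_divisors_le_smallDivSum (m : ℕ) (hm : m ≠ 0) :
    ∑ d ∈ m.divisors, d ≤ smallDivSum (m ^ 2) := by
  apply Finset.sum_le_sum_of_subset
  intro d hd
  rw [Nat.mem_divisors] at hd
  rw [Finset.mem_filter, Nat.mem_divisors]
  refine ⟨⟨hd.1.trans (dvd_pow_self m two_ne_zero), pow_ne_zero 2 hm⟩, ?_⟩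
  exact Nat.pow_le_pow_left (Nat.le_of_dvd (Nat.pos_of_ne_zero hm) hd.1) 2

lemma harmonic_le (k : ℕ) :
    ∑ i ∈ Finset.range k, (1 / (i + 1) : ℝ) ≤
      ((∑ d ∈ (Nat.factorial k).divisors, d : ℕ) : ℝ) / (Nat.factorial k : ℝ) := by
  have hfac : (0 : ℝ) < (Nat.factorial k : ℝ) := by
    exact_mod_cast Nat.factorial_pos k
  rw [le_div_iff₀ hfac]
  have hnat : ∑ i ∈ Finset.range k, Nat.factorial k / (i + 1) ≤
      ∑ d ∈ (Nat.factorial k).divisors, d := by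
    have himg : (Finset.range k).image (fun i => Nat.factorial k / (i + 1)) ⊆
        (Nat.factorial k).divisors := by
      intro d hd
      simp only [Finset.mem_image, Finset.mem_range] at hd
      obtain ⟨i, hi, rfl⟩ := hd
      rw [Nat.mem_divisors]
      exact ⟨Nat.div_dvd_of_dvd (Nat.dvd_factorial (Nat.succ_pos i) hi),
        Nat.factorial_ne_zero k⟩
    calc ∑ i ∈ Finset.range k, Nat.factorial k / (i + 1)
        = ∑ d ∈ (Finset.range k).image (fun i => Nat.factorial k / (i + 1)), d := by
          rw [Finset.sum_image]
          intro a ha b hb hab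
          rw [Finset.mem_coe, Finset.mem_range] at ha hb
          beta_reduce at hab
          have ha' : (a + 1) * (Nat.factorial k / (a + 1)) = Nat.factorial k :=
            Nat.mul_div_cancel' (Nat.dvd_factorial (Nat.succ_pos a) ha)
          have hb' : (b + 1) * (Nat.factorial k / (b + 1)) = Nat.factorial k :=
            Nat.mul_div_cancel' (Nat.dvd_factorial (Nat.succ_pos b) hb)
          rw [hab] at ha'
          have hpos : 0 < Nat.factorial k / (b + 1) :=
            Nat.div_pos (Nat.le_of_dvd (Nat.factorial_pos k)
              (Nat.dvd_factorial (Nat.succ_pos b) hb)) (Nat.succ_pos b)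
          have := ha'.trans hb'.symm
          exact Nat.succ_injective (Nat.eq_of_mul_eq_mul_right hpos this)
      _ ≤ ∑ d ∈ (Nat.factorial k).divisors, d :=
          Finset.sum_le_sum_of_subset himg
  calc (∑ i ∈ Finset.range k, (1 / (i + 1) : ℝ)) * (Nat.factorial k : ℝ)
      = ∑ i ∈ Finset.range k, ((Nat.factorial k / (i + 1) : ℕ) : ℝ) := by
        rw [Finset.sum_mul]
        apply Finset.sum_congr rfl
        intro i hi
        rw [Finset.mem_range] at hi
        rw [Nat.cast_div (Nat.dvd_factorial (Nat.succ_pos i) hi) (by positivity)]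
        push_cast
        ring
    _ = ((∑ i ∈ Finset.range k, Nat.factorial k / (i + 1) : ℕ) : ℝ) := by push_cast; rfl
    _ ≤ ((∑ d ∈ (Nat.factorial k).divisors, d : ℕ) : ℝ) := by exact_mod_cast hnat

lemma key_s7 (k : ℕ) :
    ∑ i ∈ Finset.range k, (1 / (i + 1) : ℝ) ≤
      (smallDivSum ((Nat.factorial k) ^ 2) : ℝ) / Real.sqrt (((Nat.factorial k) ^ 2 : ℕ) : ℝ) := by
  have hfac : (0 : ℝ) < (Nat.factorial k : ℝ) := by exact_mod_cast Nat.factorial_pos k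
  have hsqrt : Real.sqrt (((Nat.factorial k) ^ 2 : ℕ) : ℝ) = (Nat.factorial k : ℝ) := by
    push_cast
    rw [Real.sqrt_sq hfac.le]
  rw [hsqrt]
  refine (harmonic_le k).trans ?_
  gcongr
  exact_mod_cast sum_divisors_le_smallDivSum (Nat.factorial k) (Nat.factorial_ne_zero k)

lemma exists_big (M : ℝ) (N : ℕ) :
    ∃ n : ℕ, N ≤ n ∧ M ≤ (smallDivSum n : ℝ) / Real.sqrt n := by
  obtain ⟨k₀, hk₀⟩ := (Real.tendsto_sum_range_one_div_nat_succ_atTop.eventually_ge_atTop M).exists_forall_of_atTop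
  set k := max k₀ N with hk
  refine ⟨(Nat.factorial k) ^ 2, ?_, ?_⟩
  · calc N ≤ k := le_max_right _ _
      _ ≤ Nat.factorial k := Nat.self_le_factorial k
      _ ≤ (Nat.factorial k) ^ 2 := Nat.le_self_pow two_ne_zero _
  · exact (hk₀ k (le_max_left _ _)).trans (key_s7 k)

theorem smallDivSum_limsup_eq_top :
    limsup (fun n : ℕ => ((smallDivSum n : ℝ) / Real.sqrt n : EReal)) atTop = ⊤ ∧
    ¬ BddAbove (Set.range fun n : ℕ => (smallDivSum n : ℝ) / Real.sqrt n) := by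
  constructor
  · rw [EReal.eq_top_iff_forall_lt]
    intro M
    have h1 : ((M + 1 : ℝ) : EReal) ≤
        limsup (fun n : ℕ => ((smallDivSum n : ℝ) / Real.sqrt n : EReal)) atTop := by
      apply le_limsup_of_frequently_le'
      rw [frequently_atTop]
      intro N
      obtain ⟨n, hn, hM⟩ := exists_big (M + 1) N
      refine ⟨n, hn, ?_⟩
      rw [← EReal.coe_div]
      exact_mod_cast hM
    refine lt_of_lt_of_le ?_ h1
    exact_mod_cast (lt_add_one M)
  · rintro ⟨B, hB⟩
    obtain ⟨n, -, hM⟩ := exists_big (B + 1) 0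
    have := hB (Set.mem_range_self n)
    linarith
end

section
/- Let p_1 < p_2 < ⋯ < p_n be the first n primes and let s_n = p_1²·p_2²⋯p_n². Then a(s_n) ≥ ∏_{k=1}^{n} (p_k + 1); consequently a(s_n)/√(s_n) ≥ ∏_{k=1}^{n} (1 + 1/p_k). -/
theorem smallDivSum_product_of_prime_squares (n : ℕ)
    (s : ℕ) (hs : s = ∏ k ∈ Finset.range n, (Nat.nth Nat.Prime k) ^ 2) :
    (∏ k ∈ Finset.range n, (Nat.nth Nat.Prime k + 1)) ≤ smallDivSum s ∧
    (∏ k ∈ Finset.range n, (1 + 1 / (Nat.nth Nat.Prime k : ℝ)))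
      ≤ (smallDivSum s : ℝ) / Real.sqrt s := by
  set P := ∏ k ∈ Finset.range n, Nat.nth Nat.Prime k with hP
  have hprime : ∀ k, (Nat.nth Nat.Prime k).Prime := fun k => Nat.prime_nth_prime k
  have hPpos : 0 < P := Finset.prod_pos fun k _ => (hprime k).pos
  have hsP : s = P ^ 2 := by rw [hs, hP, Finset.prod_pow]
  have hinj : Function.Injective (Nat.nth Nat.Prime) :=
    Nat.nth_injective Nat.infinite_setOf_prime
  have hσ : ∑ d ∈ P.divisors, d = ∏ k ∈ Finset.range n, (Nat.nth Nat.Prime k + 1) := by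
    have h := (ArithmeticFunction.isMultiplicative_sigma (k := 1)).map_prod
      (Nat.nth Nat.Prime) (Finset.range n)
      (fun i _ j _ hij => (Nat.coprime_primes (hprime i) (hprime j)).mpr
        (fun he => hij (hinj he)))
    rw [ArithmeticFunction.sigma_one_apply] at h
    rw [hP, h]
    refine Finset.prod_congr rfl fun k _ => ?_
    rw [ArithmeticFunction.sigma_one_apply, (hprime k).divisors,
      Finset.sum_insert (by simp [(hprime k).one_lt.ne]), Finset.sum_singleton, Nat.add_comm]
  have hsub : P.divisors ⊆ s.divisors.filter (fun d => d ^ 2 ≤ s) := by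
    intro d hd
    rw [Nat.mem_divisors] at hd
    rw [Finset.mem_filter, Nat.mem_divisors]
    refine ⟨⟨hd.1.trans ⟨P, by rw [hsP]; ring⟩, by rw [hsP]; positivity⟩, ?_⟩
    rw [hsP]
    exact Nat.pow_le_pow_left (Nat.le_of_dvd hPpos hd.1) 2
  have h1 : (∏ k ∈ Finset.range n, (Nat.nth Nat.Prime k + 1)) ≤ smallDivSum s := by
    rw [← hσ, smallDivSum]
    exact Finset.sum_le_sum_of_subset hsub
  refine ⟨h1, ?_⟩
  have hsqrt : Real.sqrt s = (P : ℝ) := by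
    rw [hsP]; push_cast; exact Real.sqrt_sq (by positivity)
  rw [hsqrt, le_div_iff₀ (by exact_mod_cast hPpos)]
  have hprod : (∏ k ∈ Finset.range n, (1 + 1 / (Nat.nth Nat.Prime k : ℝ))) * P
      = ∏ k ∈ Finset.range n, ((Nat.nth Nat.Prime k : ℝ) + 1) := by
    rw [hP]
    push_cast
    rw [← Finset.prod_mul_distrib]
    refine Finset.prod_congr rfl fun k _ => ?_
    have : (Nat.nth Nat.Prime k : ℝ) ≠ 0 := by
      exact_mod_cast (hprime k).pos.ne'
    field_simp
  rw [hprod]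
  calc (∏ k ∈ Finset.range n, ((Nat.nth Nat.Prime k : ℝ) + 1))
      = ((∏ k ∈ Finset.range n, (Nat.nth Nat.Prime k + 1) : ℕ) : ℝ) := by push_cast; rfl
    _ ≤ (smallDivSum s : ℝ) := by exact_mod_cast h1
end

section
/- The series ∑_{n=1}^{∞} a(n)/n^{3/2} diverges (its partial sums tend to +∞). -/
open Filter

/-- For `1 ≤ d` and `d ≤ m ≤ 2d`, each term `d / (d*m)^(3/2)` is at least `1/(8 d^2)`. -/
lemma small_term_bound (d m : ℕ) (hd : 1 ≤ d) (hm1 : d ≤ m) (hm2 : m ≤ 2 * d) :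
    (1 : ℝ) / (8 * (d : ℝ) ^ 2) ≤ (d : ℝ) / ((d * m : ℕ) : ℝ) ^ ((3 : ℝ) / 2) := by
  have hdR : (1 : ℝ) ≤ (d : ℝ) := by exact_mod_cast hd
  have hdm : (1 : ℕ) ≤ d * m := Nat.mul_pos (by omega) (by omega)
  have hX : ((d * m : ℕ) : ℝ) ^ ((3 : ℝ) / 2) ≤ 8 * (d : ℝ) ^ 3 := by
    have h1 : ((d * m : ℕ) : ℝ) ≤ ((2 : ℝ) * d) ^ 2 := by
      have hmR : (m : ℝ) ≤ 2 * d := by exact_mod_cast hm2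
      have h0 : (0 : ℝ) ≤ (d : ℝ) := by positivity
      push_cast
      nlinarith [mul_le_mul_of_nonneg_left hmR h0]
    calc ((d * m : ℕ) : ℝ) ^ ((3 : ℝ) / 2)
        ≤ (((2 : ℝ) * d) ^ 2) ^ ((3 : ℝ) / 2) := by
          apply Real.rpow_le_rpow (by positivity) h1 (by norm_num)
      _ = ((2 : ℝ) * d) ^ (3 : ℕ) := by
          rw [← Real.rpow_natCast ((2 : ℝ) * d) 2, ← Real.rpow_mul (by positivity),
            ← Real.rpow_natCast ((2 : ℝ) * d) 3]
          norm_num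
      _ = 8 * (d : ℝ) ^ 3 := by ring
  have hXpos : (0 : ℝ) < ((d * m : ℕ) : ℝ) ^ ((3 : ℝ) / 2) := by
    apply Real.rpow_pos_of_pos
    exact_mod_cast hdm
  rw [div_le_div_iff₀ (by positivity) hXpos]
  nlinarith [hX, hdR]

/-- Key lower bound on partial sums. -/
lemma key_lower_bound (N : ℕ) :
    (1 / 8 : ℝ) * ∑ i ∈ Finset.range (Nat.sqrt (N / 2)), (1 : ℝ) / (i + 1) ≤
      ∑ k ∈ Finset.Icc 1 N, (smallDivSum k : ℝ) / (k : ℝ) ^ ((3 : ℝ) / 2) := by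
  classical
  set D := Nat.sqrt (N / 2) with hD
  -- Rewrite RHS as a sum over a sigma set of pairs (k, d)
  have hS : ∑ k ∈ Finset.Icc 1 N, (smallDivSum k : ℝ) / (k : ℝ) ^ ((3 : ℝ) / 2) =
      ∑ p ∈ (Finset.Icc 1 N).sigma
        (fun k => k.divisors.filter (fun d => d ^ 2 ≤ k)),
        ((p.2 : ℝ) / (p.1 : ℝ) ^ ((3 : ℝ) / 2)) := by
    rw [Finset.sum_sigma]
    refine Finset.sum_congr rfl fun k _ => ?_
    rw [smallDivSum, Nat.cast_sum, Finset.sum_div]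
  rw [hS]
  -- the small index set of pairs (d, m), d ∈ [1, D], m ∈ [d, 2d]
  set P : Finset ((_ : ℕ) × ℕ) :=
    (Finset.Icc 1 D).sigma (fun d => Finset.Icc d (2 * d)) with hP
  set e : ((_ : ℕ) × ℕ) → ((_ : ℕ) × ℕ) := fun p => ⟨p.1 * p.2, p.1⟩ with he
  set g : ((_ : ℕ) × ℕ) → ℝ := fun p => (p.2 : ℝ) / (p.1 : ℝ) ^ ((3 : ℝ) / 2) with hg
  have hinj : ∀ p ∈ P, ∀ q ∈ P, e p = e q → p = q := by
    rintro ⟨d₁, m₁⟩ hp ⟨d₂, m₂⟩ hq h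
    have h2 : d₁ = d₂ := congrArg (fun p => p.snd) h
    have h1 : d₁ * m₁ = d₂ * m₂ := congrArg (fun p => p.fst) h
    subst h2
    simp only [hP, Finset.mem_sigma, Finset.mem_Icc] at hp
    have hd : 0 < d₁ := lt_of_lt_of_le Nat.zero_lt_one hp.1.1
    have : m₁ = m₂ := Nat.eq_of_mul_eq_mul_left hd h1
    subst this
    rfl
  have hsubset : P.image e ⊆ (Finset.Icc 1 N).sigma
      (fun k => k.divisors.filter (fun d => d ^ 2 ≤ k)) := by
    intro q hq
    obtain ⟨p, hp, rfl⟩ := Finset.mem_image.mp hq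
    obtain ⟨d, m⟩ := p
    simp only [hP, Finset.mem_sigma, Finset.mem_Icc] at hp
    obtain ⟨⟨hd1, hdD⟩, hmd, hm2d⟩ := hp
    have hdm_pos : 1 ≤ d * m := Nat.mul_pos (by omega) (by omega)
    have hdmN : d * m ≤ N := by
      have h1 : d * m ≤ 2 * (d * d) := by
        calc d * m ≤ d * (2 * d) := Nat.mul_le_mul_left d hm2d
          _ = 2 * (d * d) := by ring
      have h2 : d * d ≤ N / 2 := Nat.le_sqrt.mp hdD
      calc d * m ≤ 2 * (d * d) := h1
        _ ≤ 2 * (N / 2) := Nat.mul_le_mul_left 2 h2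
        _ ≤ N := by omega
    simp only [he, Finset.mem_sigma, Finset.mem_Icc, Finset.mem_filter, Nat.mem_divisors]
    refine ⟨⟨hdm_pos, hdmN⟩, ⟨⟨Dvd.intro m rfl, by positivity⟩, ?_⟩⟩
    calc d ^ 2 = d * d := sq d
      _ ≤ d * m := Nat.mul_le_mul_left d hmd
  have himg : ∑ p ∈ P, g (e p) = ∑ q ∈ P.image e, g q :=
    (Finset.sum_image hinj).symm
  have hle : ∑ q ∈ P.image e, g q ≤
      ∑ p ∈ (Finset.Icc 1 N).sigma
        (fun k => k.divisors.filter (fun d => d ^ 2 ≤ k)), g p := by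
    apply Finset.sum_le_sum_of_subset_of_nonneg hsubset
    intro p _ _
    simp only [hg]
    positivity
  -- lower bound the P sum by the harmonic-type sum
  have hlow : (1 / 8 : ℝ) * ∑ i ∈ Finset.range D, (1 : ℝ) / (i + 1) ≤
      ∑ p ∈ P, g (e p) := by
    rw [hP, Finset.sum_sigma]
    have hIcc : ∑ d ∈ Finset.Icc 1 D, (1 / 8 : ℝ) * (1 / (d : ℝ)) =
        (1 / 8 : ℝ) * ∑ i ∈ Finset.range D, (1 : ℝ) / (i + 1) := by
      rw [Finset.mul_sum, ← Finset.Ico_add_one_right_eq_Icc, Finset.sum_Ico_eq_sum_range]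
      refine Finset.sum_congr (by rw [Nat.add_sub_cancel]) fun i _ => ?_
      push_cast
      ring
    rw [← hIcc]
    apply Finset.sum_le_sum
    intro d hd
    rw [Finset.mem_Icc] at hd
    obtain ⟨hd1, _⟩ := hd
    have hdR : (1 : ℝ) ≤ (d : ℝ) := by exact_mod_cast hd1
    have hcard : (Finset.Icc d (2 * d)).card = d + 1 := by
      rw [Nat.card_Icc]; omega
    have hstep : ((Finset.Icc d (2 * d)).card : ℝ) * ((1 : ℝ) / (8 * (d : ℝ) ^ 2)) ≤
        ∑ m ∈ Finset.Icc d (2 * d), g (e ⟨d, m⟩) := by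
      have := Finset.card_nsmul_le_sum (Finset.Icc d (2 * d))
        (fun m => g (e ⟨d, m⟩)) ((1 : ℝ) / (8 * (d : ℝ) ^ 2)) ?_
      · simpa [nsmul_eq_mul] using this
      · intro m hm
        rw [Finset.mem_Icc] at hm
        simpa [hg, he] using small_term_bound d m hd1 hm.1 hm.2
    calc (1 / 8 : ℝ) * (1 / (d : ℝ))
        ≤ ((Finset.Icc d (2 * d)).card : ℝ) * ((1 : ℝ) / (8 * (d : ℝ) ^ 2)) := by
          rw [hcard]
          push_cast
          have heq : (1 / 8 : ℝ) * (1 / (d : ℝ)) = (d : ℝ) * ((1 : ℝ) / (8 * (d : ℝ) ^ 2)) := by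
            field_simp
          rw [heq]
          apply mul_le_mul_of_nonneg_right (by linarith) (by positivity)
      _ ≤ ∑ m ∈ Finset.Icc d (2 * d), g (e ⟨d, m⟩) := hstep
  calc (1 / 8 : ℝ) * ∑ i ∈ Finset.range D, (1 : ℝ) / (i + 1)
      ≤ ∑ p ∈ P, g (e p) := hlow
    _ = ∑ q ∈ P.image e, g q := himg
    _ ≤ _ := hle

theorem smallDivSum_dirichlet_diverges_at_three_halves :
    Tendsto (fun n : ℕ => ∑ k ∈ Finset.Icc 1 n, (smallDivSum k : ℝ) / (k : ℝ) ^ ((3 : ℝ) / 2))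
      atTop atTop := by
  have hsqrt : Tendsto (fun n : ℕ => Nat.sqrt (n / 2)) atTop atTop := by
    rw [tendsto_atTop_atTop]
    intro b
    refine ⟨2 * (b * b), fun n hn => ?_⟩
    rw [Nat.le_sqrt, Nat.le_div_iff_mul_le (by norm_num)]
    omega
  have hH := Real.tendsto_sum_range_one_div_nat_succ_atTop
  have hcomp : Tendsto
      (fun n : ℕ => (1 / 8 : ℝ) * ∑ i ∈ Finset.range (Nat.sqrt (n / 2)), (1 : ℝ) / (i + 1))
      atTop atTop :=
    Tendsto.const_mul_atTop (by norm_num) (hH.comp hsqrt)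
  exact tendsto_atTop_mono key_lower_bound hcomp
end

section
/- For every real σ > 3/2, the series ∑_{n=1}^{∞} a(n)/n^{σ} converges. Together with the divergence at σ = 3/2, this means the abscissa of convergence of the Dirichlet series ∑ a(n)/n^s is 3/2. -/
open Finset Real

private noncomputable def gfun (σ : ℝ) (p : ℕ × ℕ) : ℝ :=
  if p.1 ≤ p.2 then (p.1 : ℝ) / ((p.1 : ℝ) * p.2) ^ σ else 0

private lemma gfun_nonneg (σ : ℝ) (p : ℕ × ℕ) : 0 ≤ gfun σ p := by
  unfold gfun; split <;> positivity

private lemma gfun_le (σ : ℝ) (p : ℕ × ℕ) :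
    gfun σ p ≤ (p.1 : ℝ) ^ (1/2 - σ) * (p.2 : ℝ) ^ (1/2 - σ) := by
  obtain ⟨d, m⟩ := p
  unfold gfun
  simp only
  split
  · rename_i h
    rcases Nat.eq_zero_or_pos d with hd | hd
    · subst hd; simp; positivity
    · have hd0 : (0:ℝ) < d := by exact_mod_cast hd
      have hm0 : (0:ℝ) < m := lt_of_lt_of_le hd0 (by exact_mod_cast h)
      rw [Real.mul_rpow hd0.le hm0.le, div_le_iff₀ (by positivity)]
      have key : (d:ℝ) ^ (1/2 - σ) * (m:ℝ) ^ (1/2 - σ) * ((d:ℝ)^σ * (m:ℝ)^σ)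
          = (d:ℝ)^(1/2:ℝ) * (m:ℝ)^(1/2:ℝ) := by
        rw [show (d:ℝ) ^ (1/2 - σ) * (m:ℝ) ^ (1/2 - σ) * ((d:ℝ)^σ * (m:ℝ)^σ)
            = ((d:ℝ)^(1/2-σ) * (d:ℝ)^σ) * ((m:ℝ)^(1/2-σ) * (m:ℝ)^σ) by ring,
          ← Real.rpow_add hd0, ← Real.rpow_add hm0]
        norm_num
      rw [key]
      have hdd : (d:ℝ) = (d:ℝ)^(1/2:ℝ) * (d:ℝ)^(1/2:ℝ) := by
        rw [← Real.rpow_add hd0]; norm_num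
      have h12 : (d:ℝ)^(1/2:ℝ) ≤ (m:ℝ)^(1/2:ℝ) :=
        Real.rpow_le_rpow hd0.le (by exact_mod_cast h) (by norm_num)
      calc (d:ℝ) = (d:ℝ)^(1/2:ℝ) * (d:ℝ)^(1/2:ℝ) := hdd
        _ ≤ (d:ℝ)^(1/2:ℝ) * (m:ℝ)^(1/2:ℝ) :=
            mul_le_mul_of_nonneg_left h12 (by positivity)
  · positivity

private lemma gfun_summable (σ : ℝ) (hσ : 3 / 2 < σ) : Summable (gfun σ) := by
  have hs : Summable (fun n : ℕ => (n : ℝ) ^ (1/2 - σ)) := by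
    rw [Real.summable_nat_rpow]
    linarith
  have : Summable (fun p : ℕ × ℕ => (p.1 : ℝ) ^ (1/2 - σ) * (p.2 : ℝ) ^ (1/2 - σ)) :=
    hs.mul_of_nonneg hs (fun n => by positivity) (fun n => by positivity)
  exact this.of_nonneg_of_le (gfun_nonneg σ) (gfun_le σ)

theorem smallDivSum_dirichlet_summable (σ : ℝ) (hσ : 3 / 2 < σ) :
    Summable (fun n : ℕ => (smallDivSum n : ℝ) / (n : ℝ) ^ σ) := by
  have hg := gfun_summable σ hσ
  set P : ℕ → Finset (ℕ × ℕ) :=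
    fun n => (n.divisors.filter (fun d => d ^ 2 ≤ n)).image (fun d => (d, n / d)) with hP
  have hPmul : ∀ n, ∀ p ∈ P n, p.1 * p.2 = n := by
    intro n p hp
    simp only [hP, mem_image, mem_filter, Nat.mem_divisors] at hp
    obtain ⟨d, ⟨⟨hdvd, hn0⟩, _⟩, rfl⟩ := hp
    exact Nat.mul_div_cancel' hdvd
  have hfn : ∀ n, (smallDivSum n : ℝ) / (n : ℝ) ^ σ = ∑ p ∈ P n, gfun σ p := by
    intro n
    rcases Nat.eq_zero_or_pos n with rfl | hn
    · simp [smallDivSum, hP]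
    have hn0 : (0:ℝ) < n := by exact_mod_cast hn
    rw [hP]
    rw [Finset.sum_image (by intro a _ b _ hab; exact (Prod.mk.injEq _ _ _ _ ▸ hab).1)]
    rw [smallDivSum, Nat.cast_sum, Finset.sum_div]
    apply Finset.sum_congr rfl
    intro d hd
    simp only [mem_filter, Nat.mem_divisors] at hd
    obtain ⟨⟨hdvd, _⟩, hd2⟩ := hd
    have hdpos : 0 < d := Nat.pos_of_dvd_of_pos hdvd hn
    have hmul : d * (n / d) = n := Nat.mul_div_cancel' hdvd
    have hle : d ≤ n / d := by
      have : d * d ≤ d * (n / d) := by rw [hmul]; nlinarith [hd2, sq d]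
      exact Nat.le_of_mul_le_mul_left this hdpos
    have hcast : ((d:ℝ) * ((n/d : ℕ):ℝ)) = (n:ℝ) := by rw [← Nat.cast_mul, hmul]
    rw [gfun, if_pos hle, hcast]
  apply summable_of_sum_range_le (c := ∑' p, gfun σ p)
  · intro n; positivity
  · intro N
    calc ∑ n ∈ range N, (smallDivSum n : ℝ) / (n : ℝ) ^ σ
        = ∑ n ∈ range N, ∑ p ∈ P n, gfun σ p := by
          exact Finset.sum_congr rfl fun n _ => hfn n
      _ = ∑ p ∈ (range N).biUnion P, gfun σ p := by
          rw [Finset.sum_biUnion]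
          intro a _ b _ hab
          apply Finset.disjoint_left.mpr
          intro p hpa hpb
          exact hab ((hPmul a p hpa).symm.trans (hPmul b p hpb))
      _ ≤ ∑' p, gfun σ p := Summable.sum_le_tsum _ (fun p _ => gfun_nonneg σ p) hg
end

section
/- For every natural number n ≥ 2, ∑_{k=1}^{n} a(k)/k^{3/2} ≥ 2·log⌊√n⌋ − 2·ζ(3/2), where ζ denotes the Riemann zeta function and ⌊·⌋ the integer part. -/
open Finset

lemma rpow_three_halves (x : ℝ) (hx : 0 ≤ x) : x ^ ((3:ℝ)/2) = x * Real.sqrt x := by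
  rcases eq_or_lt_of_le hx with h | h
  · rw [← h, Real.zero_rpow (by norm_num)]; simp
  · rw [Real.sqrt_eq_rpow, ← Real.rpow_one_add' h.le (by norm_num)]
    norm_num

lemma key_one_var (y : ℝ) (hy : 1 ≤ y) :
    2 / Real.sqrt y - 2 / Real.sqrt (y+1) ≤ 1 / (y * Real.sqrt y) := by
  have ha : 1 ≤ Real.sqrt y := Real.one_le_sqrt.mpr hy
  have hb : Real.sqrt y ≤ Real.sqrt (y+1) := Real.sqrt_le_sqrt (by linarith)
  have ha2 : Real.sqrt y ^ 2 = y := Real.sq_sqrt (by linarith)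
  have hb2 : Real.sqrt (y+1) ^ 2 = y + 1 := Real.sq_sqrt (by linarith)
  set a := Real.sqrt y
  set b := Real.sqrt (y+1)
  have hapos : 0 < a := by linarith
  have hbpos : 0 < b := by linarith
  have hsum : (b - a) * (b + a) = 1 := by nlinarith
  have hba2 : 2*a*(b-a) ≤ 1 := by nlinarith [sq_nonneg (b-a)]
  have h4 : a^2 * (2*a*(b-a)) ≤ a^2 * 1 := mul_le_mul_of_nonneg_left hba2 (sq_nonneg a)
  have h5 : a*a ≤ a*b := mul_le_mul_of_nonneg_left hb hapos.le
  rw [div_sub_div _ _ (ne_of_gt hapos) (ne_of_gt hbpos),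
    div_le_div_iff₀ (by positivity) (by positivity)]
  nlinarith [h4, h5, ha2]

lemma term_ge (d m : ℕ) (hd : 1 ≤ d) (hm : 1 ≤ m) :
    2 / Real.sqrt ((d:ℝ)*m) - 2 / Real.sqrt ((d:ℝ)*((m:ℝ)+1))
      ≤ (d:ℝ) / ((d*m : ℕ) : ℝ) ^ ((3:ℝ)/2) := by
  have hd' : (1:ℝ) ≤ d := by exact_mod_cast hd
  have hm' : (1:ℝ) ≤ m := by exact_mod_cast hm
  have hdpos : (0:ℝ) < d := by linarith
  have hmpos : (0:ℝ) < m := by linarith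
  have hsd : 0 < Real.sqrt d := Real.sqrt_pos.mpr hdpos
  have hsm : 0 < Real.sqrt m := Real.sqrt_pos.mpr hmpos
  have hcast : ((d*m : ℕ) : ℝ) = (d:ℝ) * m := by push_cast; ring
  rw [hcast, rpow_three_halves _ (by positivity), Real.sqrt_mul hdpos.le,
    Real.sqrt_mul hdpos.le]
  have key := key_one_var (m:ℝ) hm'
  have h1 : 2 / (Real.sqrt d * Real.sqrt m) - 2 / (Real.sqrt d * Real.sqrt ((m:ℝ)+1))
      = (1 / Real.sqrt d) * (2 / Real.sqrt m - 2 / Real.sqrt ((m:ℝ)+1)) := by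
    field_simp
  have h2 : (d:ℝ) / ((d:ℝ) * m * (Real.sqrt d * Real.sqrt m))
      = (1 / Real.sqrt d) * (1 / ((m:ℝ) * Real.sqrt m)) := by
    rw [div_mul_div_comm, one_mul, div_eq_div_iff (by positivity) (by positivity)]
    ring
  rw [h1, h2]
  exact mul_le_mul_of_nonneg_left key (by positivity)

lemma telescope (d : ℕ) (hd : 1 ≤ d) : ∀ M : ℕ, d ≤ M →
    2 / (d:ℝ) - 2 / Real.sqrt ((d:ℝ)*((M:ℝ)+1))
      ≤ ∑ m ∈ Finset.Icc d M, (d:ℝ) / ((d*m : ℕ) : ℝ) ^ ((3:ℝ)/2) := by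
  have hdpos : (0:ℝ) < d := by exact_mod_cast hd
  apply Nat.le_induction
  · rw [Finset.Icc_self, Finset.sum_singleton]
    have := term_ge d d hd hd
    have hdd : Real.sqrt ((d:ℝ)*d) = d := by
      rw [Real.sqrt_mul_self hdpos.le]
    rw [hdd] at this
    exact this
  · intro M hM ih
    have e : ((M+1:ℕ):ℝ) = (M:ℝ)+1 := by push_cast; ring
    have hterm := term_ge d (M+1) hd (by omega)
    rw [e] at hterm
    rw [Finset.sum_Icc_succ_top (by omega), e]
    calc 2 / (d:ℝ) - 2 / Real.sqrt ((d:ℝ)*((M:ℝ)+1+1))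
        = (2 / (d:ℝ) - 2 / Real.sqrt ((d:ℝ)*((M:ℝ)+1)))
          + (2 / Real.sqrt ((d:ℝ)*((M:ℝ)+1)) - 2 / Real.sqrt ((d:ℝ)*((M:ℝ)+1+1))) := by ring
      _ ≤ _ := add_le_add ih hterm

lemma zeta_re_ge_one : (1:ℝ) ≤ (riemannZeta ((3 : ℂ) / 2)).re := by
  have hre : (1:ℝ) < ((3:ℂ)/2).re := by norm_num
  rw [zeta_eq_tsum_one_div_nat_cpow hre]
  rw [Complex.re_tsum (Complex.summable_one_div_nat_cpow.mpr hre)]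
  have hterm : ∀ n : ℕ, (1 / (n : ℂ) ^ ((3:ℂ)/2)).re = 1 / (n : ℝ) ^ ((3:ℝ)/2) := by
    intro n
    have : ((3:ℂ)/2) = ((3/2 : ℝ) : ℂ) := by norm_num
    rw [this, ← Complex.ofReal_natCast, ← Complex.ofReal_cpow (by positivity)]
    norm_num [Complex.ofReal_re]
  simp_rw [hterm]
  have hs : Summable (fun n : ℕ => 1 / (n:ℝ) ^ ((3:ℝ)/2)) :=
    Real.summable_one_div_nat_rpow.mpr (by norm_num)
  have := Summable.le_tsum hs 1 (fun i _ => by positivity)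
  simpa using this

lemma harm : ∀ s : ℕ, Real.log (s+1) ≤ ∑ d ∈ Finset.Icc 1 s, 1/(d:ℝ) := by
  intro s
  induction s with
  | zero => simp
  | succ s ih =>
    rw [Finset.sum_Icc_succ_top (by omega)]
    have h1 : Real.log ((s:ℝ)+1+1) - Real.log ((s:ℝ)+1) ≤ 1/((s:ℝ)+1) := by
      rw [← Real.log_div (by positivity) (by positivity)]
      have := Real.log_le_sub_one_of_pos (x := ((s:ℝ)+1+1)/((s:ℝ)+1)) (by positivity)
      have h2 : ((s:ℝ)+1+1)/((s:ℝ)+1) - 1 = 1/((s:ℝ)+1) := by field_simp; ring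
      linarith
    push_cast
    linarith

lemma reindex (n : ℕ) :
    ∑ k ∈ Finset.Icc 1 n, (smallDivSum k : ℝ) / (k:ℝ)^((3:ℝ)/2)
    = ∑ d ∈ Finset.Icc 1 (Nat.sqrt n), ∑ m ∈ Finset.Icc d (n/d),
        (d:ℝ)/((d*m:ℕ):ℝ)^((3:ℝ)/2) := by
  have hterm : ∀ k ∈ Finset.Icc 1 n, (smallDivSum k : ℝ) / (k:ℝ)^((3:ℝ)/2)
      = ∑ d ∈ k.divisors.filter (fun d => d^2 ≤ k), (d:ℝ)/(k:ℝ)^((3:ℝ)/2) := fun k _ => by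
    rw [smallDivSum, Nat.cast_sum, Finset.sum_div]
  rw [Finset.sum_congr rfl hterm, Finset.sum_sigma', Finset.sum_sigma']
  refine Finset.sum_nbij' (i := fun p => (⟨p.2, p.1 / p.2⟩ : Σ _ : ℕ, ℕ))
    (j := fun p => (⟨p.1 * p.2, p.1⟩ : Σ _ : ℕ, ℕ)) ?_ ?_ ?_ ?_ ?_
  · rintro ⟨k, d⟩ hp
    simp only [Finset.mem_sigma, Finset.mem_Icc, Finset.mem_filter, Nat.mem_divisors] at hp ⊢
    obtain ⟨⟨hk1, hkn⟩, ⟨hdvd, hk0⟩, hd2⟩ := hp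
    have hd0 : 0 < d := Nat.pos_of_mem_divisors (Nat.mem_divisors.mpr ⟨hdvd, hk0⟩)
    refine ⟨⟨hd0, Nat.le_sqrt.mpr (by nlinarith [hd2, hkn])⟩, ?_, Nat.div_le_div_right hkn⟩
    rw [Nat.le_div_iff_mul_le hd0]
    nlinarith [hd2]
  · rintro ⟨d, m⟩ hp
    simp only [Finset.mem_sigma, Finset.mem_Icc, Finset.mem_filter, Nat.mem_divisors] at hp ⊢
    obtain ⟨⟨hd1, hds⟩, hdm, hmnd⟩ := hp
    have hdm_le : d * m ≤ n := le_trans (Nat.mul_le_mul_left d hmnd) (Nat.mul_div_le n d)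
    refine ⟨⟨Nat.one_le_iff_ne_zero.mpr (Nat.mul_ne_zero (by omega) (by omega)), hdm_le⟩,
      ⟨Dvd.intro m rfl, Nat.mul_ne_zero (by omega) (by omega)⟩, ?_⟩
    calc d^2 = d*d := sq d
      _ ≤ d*m := Nat.mul_le_mul_left d hdm
  · rintro ⟨k, d⟩ hp
    simp only [Finset.mem_sigma, Finset.mem_Icc, Finset.mem_filter, Nat.mem_divisors] at hp
    obtain ⟨_, ⟨hdvd, hk0⟩, _⟩ := hp
    simp [Nat.mul_div_cancel' hdvd]
  · rintro ⟨d, m⟩ hp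
    simp only [Finset.mem_sigma, Finset.mem_Icc] at hp
    have hd0 : 0 < d := hp.1.1
    simp [Nat.mul_div_cancel_left m hd0]
  · rintro ⟨k, d⟩ hp
    simp only [Finset.mem_sigma, Finset.mem_Icc, Finset.mem_filter, Nat.mem_divisors] at hp
    obtain ⟨_, ⟨hdvd, hk0⟩, _⟩ := hp
    simp [Nat.mul_div_cancel' hdvd]

theorem smallDivSum_partial_dirichlet_lower_bound (n : ℕ) (hn : 2 ≤ n) :
    2 * Real.log (Nat.sqrt n) - 2 * (riemannZeta ((3 : ℂ) / 2)).re
      ≤ ∑ k ∈ Finset.Icc 1 n, (smallDivSum k : ℝ) / (k : ℝ) ^ ((3 : ℝ) / 2) := by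

  rw [reindex n]
  set s := Nat.sqrt n with hs
  have hs1 : 1 ≤ s := by
    rw [hs]; have := Nat.sqrt_le_sqrt (show 1 ≤ n by omega); simpa using this
  have hnpos : (0:ℝ) < n := by positivity
  have hsqn : 0 < Real.sqrt n := Real.sqrt_pos.mpr hnpos
  have hinner : ∀ d ∈ Finset.Icc 1 s, 2/(d:ℝ) - 2/Real.sqrt n
      ≤ ∑ m ∈ Finset.Icc d (n/d), (d:ℝ)/((d*m:ℕ):ℝ)^((3:ℝ)/2) := by
    intro d hd
    simp only [Finset.mem_Icc] at hd
    have hdd : d * d ≤ n := Nat.le_sqrt.mp hd.2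
    have hdM : d ≤ n/d := (Nat.le_div_iff_mul_le (by omega)).mpr hdd
    refine le_trans ?_ (telescope d hd.1 (n/d) hdM)
    have hge : (n:ℝ) ≤ (d:ℝ)*(((n/d : ℕ):ℝ) + 1) := by
      have h1 := Nat.div_add_mod n d
      have h2 := Nat.mod_lt n (show 0 < d by omega)
      have h3 : n ≤ d * (n/d) + d := by omega
      have h4 : (n:ℝ) ≤ (d:ℝ) * ((n/d : ℕ):ℝ) + d := by exact_mod_cast h3
      rw [mul_add, mul_one]
      exact h4
    have hsq := Real.sqrt_le_sqrt hge
    have : 2 / Real.sqrt ((d:ℝ)*(((n/d:ℕ):ℝ)+1)) ≤ 2 / Real.sqrt n :=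
      div_le_div_of_nonneg_left (by norm_num) hsqn hsq
    linarith
  have hsum := Finset.sum_le_sum hinner
  have hB : ∑ d ∈ Finset.Icc 1 s, (2/(d:ℝ) - 2/Real.sqrt n)
      = 2 * (∑ d ∈ Finset.Icc 1 s, 1/(d:ℝ)) - (s:ℝ) * (2/Real.sqrt n) := by
    have h2 : ∀ x : ℕ, 2/(x:ℝ) = 2*(1/(x:ℝ)) := fun x => by ring
    simp_rw [h2]
    rw [Finset.sum_sub_distrib, ← Finset.mul_sum, Finset.sum_const, Nat.card_Icc]
    simp [nsmul_eq_mul]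
  have hC : Real.log s ≤ ∑ d ∈ Finset.Icc 1 s, 1/(d:ℝ) := by
    refine le_trans ?_ (harm s)
    apply Real.log_le_log (by exact_mod_cast hs1)
    push_cast; linarith
  have hD : (s:ℝ) * (2/Real.sqrt n) ≤ 2 := by
    have hss : s * s ≤ n := by rw [hs]; have := Nat.sqrt_le' n; nlinarith [this]
    have hss' : (s:ℝ) * (s:ℝ) ≤ (n:ℝ) := by exact_mod_cast hss
    have hsle : (s:ℝ) ≤ Real.sqrt n := by
      have h5 : Real.sqrt ((s:ℝ)*(s:ℝ)) ≤ Real.sqrt n := Real.sqrt_le_sqrt hss'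
      rwa [Real.sqrt_mul_self (by positivity)] at h5
    rw [mul_div_assoc', div_le_iff₀ hsqn]; linarith
  have hE := zeta_re_ge_one
  rw [hB] at hsum
  linarith
end

section
/- For every real σ with 3/2 < σ < 2 and every natural number n ≥ 1, ∑_{k=1}^{n} a(k)/k^{σ} ≤ (ζ(2(σ−1)) + 1)/(2 − σ), where ζ denotes the Riemann zeta function; in particular the partial sums of ∑ a(k)/k^σ are bounded for such σ. -/
open Finset Real

lemma bern_aux {β : ℝ} (hβ : 0 < β) {x : ℝ} (hx : 1 ≤ x) :
    1 + β / (x + 1) ≤ (1 + 1 / x) ^ β := by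
  have hx0 : (0:ℝ) < x := by linarith
  have hx1 : (0:ℝ) < x + 1 := by linarith
  rcases le_or_gt 1 β with hβ1 | hβ1
  · have hxx : (0:ℝ) < 1 / x := by positivity
    have h := one_add_mul_self_le_rpow_one_add (s := 1 / x) (by linarith) hβ1
    have h2 : β / (x + 1) ≤ β * (1 / x) := by
      rw [div_le_iff₀ hx1, mul_comm β (1/x), mul_assoc, ← sub_nonneg]
      have : 1 / x * (β * (x+1)) - β = β / x := by field_simp; ring
      rw [this]; positivity
    linarith
  · have hu1 : 1 / (x + 1) < 1 := by rw [div_lt_one hx1]; linarith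
    have hu0 : (0:ℝ) < 1 / (x + 1) := by positivity
    have h := rpow_one_add_le_one_add_mul_self (s := -(1/(x+1))) (by linarith) hβ.le hβ1.le
    have he : (1:ℝ) + -(1/(x+1)) = x / (x+1) := by field_simp; ring
    have hb : 1 + β * -(1/(x+1)) = 1 - β/(x+1) := by ring
    rw [he, hb] at h
    have hpos : (0:ℝ) < x / (x + 1) := by positivity
    have hβu : β / (x+1) < 1 := by rw [div_lt_one hx1]; linarith
    have hkey : (1 + β/(x+1)) * (x/(x+1)) ^ β ≤ 1 := by
      have hnn : (0:ℝ) ≤ 1 + β/(x+1) := by positivity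
      calc (1 + β/(x+1)) * (x/(x+1)) ^ β ≤ (1 + β/(x+1)) * (1 - β/(x+1)) :=
            mul_le_mul_of_nonneg_left h hnn
        _ = 1 - (β/(x+1))^2 := by ring
        _ ≤ 1 := by nlinarith [sq_nonneg (β/(x+1))]
    have htb : (0:ℝ) < (x/(x+1)) ^ β := Real.rpow_pos_of_pos hpos β
    have hinv : (1 + 1/x) ^ β = ((x/(x+1)) ^ β)⁻¹ := by
      rw [← Real.inv_rpow hpos.le]
      congr 1
      field_simp
    rw [hinv, inv_eq_one_div]
    exact (le_div_iff₀ htb).mpr hkey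

lemma key_aux {β : ℝ} (hβ : 0 < β) {x : ℝ} (hx : 1 ≤ x) :
    β * (x + 1) ^ (-(β + 1)) ≤ x ^ (-β) - (x + 1) ^ (-β) := by
  have hx0 : (0:ℝ) < x := by linarith
  have hx1 : (0:ℝ) < x + 1 := by linarith
  have h := bern_aux hβ hx
  have hp : (0:ℝ) < (x+1) ^ (-β) := Real.rpow_pos_of_pos hx1 _
  have h2 : (x+1)^(-β) * (1 + β/(x+1)) ≤ (x+1)^(-β) * (1 + 1/x)^β :=
    mul_le_mul_of_nonneg_left h hp.le
  have e1 : (x+1)^(-β) * (1 + 1/x)^β = x ^ (-β) := by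
    have : (1:ℝ) + 1/x = (x+1) / x := by field_simp
    rw [this, Real.div_rpow hx1.le hx0.le, Real.rpow_neg hx1.le, Real.rpow_neg hx0.le]
    have h3 : (0:ℝ) < (x+1) ^ β := Real.rpow_pos_of_pos hx1 _
    have h4 : (0:ℝ) < x ^ β := Real.rpow_pos_of_pos hx0 _
    field_simp
  have e2 : (x+1)^(-β) * (1 + β/(x+1)) = (x+1)^(-β) + β * (x+1)^(-(β+1)) := by
    have heq : (-(β+1) : ℝ) = -β + -1 := by ring
    rw [heq, Real.rpow_add hx1, Real.rpow_neg_one]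
    field_simp
  rw [e1, e2] at h2
  linarith

lemma tele_aux {β : ℝ} (hβ : 0 < β) {d : ℕ} (hd : 1 ≤ d) {n : ℕ} (hdn : d ≤ n) :
    ∑ m ∈ Finset.Icc (d + 1) n, β * (m : ℝ) ^ (-(β + 1)) ≤ (d : ℝ) ^ (-β) - (n : ℝ) ^ (-β) := by
  induction n, hdn using Nat.le_induction with
  | base => simp
  | succ n hdn ih =>
    rw [Finset.sum_Icc_succ_top (by omega)]
    have hx : (1:ℝ) ≤ (n:ℝ) := by exact_mod_cast le_trans hd hdn
    have hk := key_aux hβ hx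
    push_cast
    push_cast at ih
    linarith

lemma inner_aux {β : ℝ} (hβ : 0 < β) {d : ℕ} (hd : 1 ≤ d) (n : ℕ) :
    ∑ m ∈ Finset.Icc d n, (m : ℝ) ^ (-(β + 1)) ≤ (d : ℝ) ^ (-(β + 1)) + (d : ℝ) ^ (-β) / β := by
  have hd0 : (0:ℝ) < (d:ℝ) := by exact_mod_cast hd
  rcases le_or_gt d n with hdn | hdn
  · have hsplit : Finset.Icc d n = insert d (Finset.Icc (d+1) n) := by
      rw [Finset.Icc_add_one_left_eq_Ioc, Finset.Ioc_insert_left hdn]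
    rw [hsplit, Finset.sum_insert (by simp)]
    have ht := tele_aux hβ hd hdn
    have hsum : ∑ m ∈ Finset.Icc (d+1) n, (m:ℝ)^(-(β+1)) ≤ ((d:ℝ)^(-β) - (n:ℝ)^(-β))/β := by
      rw [le_div_iff₀ hβ, Finset.sum_mul]
      calc ∑ m ∈ Finset.Icc (d+1) n, (m:ℝ)^(-(β+1)) * β
          = ∑ m ∈ Finset.Icc (d+1) n, β * (m:ℝ)^(-(β+1)) := by
            apply Finset.sum_congr rfl; intros; ring
        _ ≤ _ := ht
    have hn0 : (0:ℝ) ≤ (n:ℝ)^(-β) := Real.rpow_nonneg (by positivity) _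
    have h2 : ((d:ℝ)^(-β) - (n:ℝ)^(-β))/β ≤ (d:ℝ)^(-β)/β :=
      (div_le_div_iff_of_pos_right hβ).mpr (by linarith)
    linarith
  · rw [Finset.Icc_eq_empty (by omega), Finset.sum_empty]
    positivity

lemma zetaRe_aux {x : ℝ} (hx : 1 < x) (n : ℕ) :
    ∑ d ∈ Finset.Icc 1 n, (d : ℝ) ^ (-x) ≤ (riemannZeta (x : ℂ)).re := by
  have hsummable : Summable (fun m : ℕ => 1 / (m:ℝ) ^ x) :=
    Real.summable_one_div_nat_rpow.mpr hx
  have hζ : riemannZeta (x : ℂ) = ((∑' m : ℕ, 1 / (m:ℝ) ^ x : ℝ) : ℂ) := by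
    rw [zeta_eq_tsum_one_div_nat_cpow (by simpa using hx), Complex.ofReal_tsum]
    congr 1
    ext m
    rw [Complex.ofReal_div, Complex.ofReal_one, Complex.ofReal_cpow (Nat.cast_nonneg m),
      Complex.ofReal_natCast]
  rw [hζ, Complex.ofReal_re]
  have heq : ∀ d ∈ Finset.Icc 1 n, (d:ℝ) ^ (-x) = 1 / (d:ℝ) ^ x := by
    intro d hd
    rw [Real.rpow_neg (by positivity), one_div]
  rw [Finset.sum_congr rfl heq]
  exact Summable.sum_le_tsum _ (fun m _ => by positivity) hsummable


lemma combi_aux (σ : ℝ) (n : ℕ) :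
    ∑ k ∈ Finset.Icc 1 n, (smallDivSum k : ℝ) / (k : ℝ) ^ σ
      ≤ ∑ p ∈ (Finset.Icc 1 n).sigma (fun d => Finset.Icc d n),
          (p.1 : ℝ) / ((p.1 : ℝ) * (p.2 : ℝ)) ^ σ := by
  have h1 : ∑ k ∈ Finset.Icc 1 n, (smallDivSum k : ℝ) / (k : ℝ) ^ σ
      = ∑ p ∈ (Finset.Icc 1 n).sigma (fun k => k.divisors.filter (fun d => d ^ 2 ≤ k)),
          (p.2 : ℝ) / (p.1 : ℝ) ^ σ := by
    rw [Finset.sum_sigma]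
    refine Finset.sum_congr rfl fun k _ => ?_
    rw [smallDivSum, Nat.cast_sum, Finset.sum_div]
  rw [h1]
  have h2 : ∑ p ∈ (Finset.Icc 1 n).sigma (fun k => k.divisors.filter (fun d => d ^ 2 ≤ k)),
          (p.2 : ℝ) / (p.1 : ℝ) ^ σ
      = ∑ q ∈ ((Finset.Icc 1 n).sigma (fun d => Finset.Icc d n)).filter
            (fun q => q.1 * q.2 ≤ n),
          (q.1 : ℝ) / ((q.1 : ℝ) * (q.2 : ℝ)) ^ σ := by
    refine Finset.sum_nbij' (i := fun p => ⟨p.2, p.1 / p.2⟩) (j := fun q => ⟨q.1 * q.2, q.1⟩)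
      ?_ ?_ ?_ ?_ ?_
    · rintro ⟨k, d⟩ hp
      simp only [Finset.mem_sigma, Finset.mem_Icc, Finset.mem_filter, Nat.mem_divisors] at hp
      obtain ⟨⟨hk1, hkn⟩, ⟨hdvd, hk0⟩, hd2⟩ := hp
      have hd1 : 1 ≤ d := Nat.pos_of_ne_zero (fun h => by subst h; exact hk0 (Nat.zero_dvd.mp hdvd))
      have hdk : d ≤ k := Nat.le_of_dvd (by omega) hdvd
      simp only [Finset.mem_filter, Finset.mem_sigma, Finset.mem_Icc]
      refine ⟨⟨⟨hd1, le_trans hdk hkn⟩, ?_, ?_⟩, ?_⟩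
      · rw [Nat.le_div_iff_mul_le (by omega)]
        nlinarith [hd2]
      · exact le_trans (Nat.div_le_self k d) hkn
      · rw [Nat.mul_div_cancel' hdvd]; exact hkn
    · rintro ⟨d, m⟩ hq
      simp only [Finset.mem_filter, Finset.mem_sigma, Finset.mem_Icc] at hq
      obtain ⟨⟨⟨hd1, hdn⟩, hdm, hmn⟩, hprod⟩ := hq
      simp only [Finset.mem_sigma, Finset.mem_Icc, Finset.mem_filter, Nat.mem_divisors]
      refine ⟨⟨by nlinarith, hprod⟩, ⟨dvd_mul_right d m, Nat.mul_ne_zero (by omega) (by omega)⟩, by nlinarith⟩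
    · rintro ⟨k, d⟩ hp
      simp only [Finset.mem_sigma, Finset.mem_Icc, Finset.mem_filter, Nat.mem_divisors] at hp
      obtain ⟨_, ⟨hdvd, _⟩, _⟩ := hp
      simp only [Nat.mul_div_cancel' hdvd]
    · rintro ⟨d, m⟩ hq
      simp only [Finset.mem_filter, Finset.mem_sigma, Finset.mem_Icc] at hq
      have hd1 : 1 ≤ d := hq.1.1.1
      simp only [Nat.mul_div_cancel_left m (by omega : 0 < d)]
    · rintro ⟨k, d⟩ hp
      simp only [Finset.mem_sigma, Finset.mem_Icc, Finset.mem_filter, Nat.mem_divisors] at hp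
      obtain ⟨_, ⟨hdvd, _⟩, _⟩ := hp
      have : (d : ℝ) * ((k / d : ℕ) : ℝ) = (k : ℝ) := by
        rw [← Nat.cast_mul, Nat.mul_div_cancel' hdvd]
      simp only [this]
  rw [h2]
  refine Finset.sum_le_sum_of_subset_of_nonneg (Finset.filter_subset _ _) fun q _ _ => by
    positivity

theorem smallDivSum_partial_dirichlet_upper_bound (σ : ℝ) (hσ₁ : 3 / 2 < σ) (hσ₂ : σ < 2)
    (n : ℕ) (hn : 1 ≤ n) :
    ∑ k ∈ Finset.Icc 1 n, (smallDivSum k : ℝ) / (k : ℝ) ^ σ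
      ≤ ((riemannZeta ((2 * (σ - 1) : ℝ) : ℂ)).re + 1) / (2 - σ) := by
  have hβ : (0:ℝ) < σ - 1 := by linarith
  have hβ' : (0:ℝ) < 2 * σ - 2 := by linarith
  set Z : ℝ := (riemannZeta ((2 * (σ - 1) : ℝ) : ℂ)).re with hZdef
  have hx : (1:ℝ) < 2 * (σ - 1) := by linarith
  refine le_trans (combi_aux σ n) ?_
  rw [Finset.sum_sigma]
  have hinner : ∀ d ∈ Finset.Icc 1 n,
      ∑ m ∈ Finset.Icc d n, (d : ℝ) / ((d : ℝ) * (m : ℝ)) ^ σ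
        ≤ (d : ℝ) ^ (1 - 2*σ) + (d : ℝ) ^ (2 - 2*σ) / (σ - 1) := by
    intro d hd
    rw [Finset.mem_Icc] at hd
    have hd1 : 1 ≤ d := hd.1
    have hd0 : (0:ℝ) < (d : ℝ) := by exact_mod_cast hd1
    have e : ∀ m ∈ Finset.Icc d n,
        (d : ℝ) / ((d : ℝ) * (m : ℝ)) ^ σ = (d : ℝ) ^ (1 - σ) * (m : ℝ) ^ (-(σ - 1 + 1)) := by
      intro m hm
      rw [Finset.mem_Icc] at hm
      have hm0 : (0:ℝ) < (m : ℝ) := by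
        have : 1 ≤ m := le_trans hd1 hm.1
        exact_mod_cast this
      have h1 : (d:ℝ) ^ σ ≠ 0 := (Real.rpow_pos_of_pos hd0 σ).ne'
      have h2 : (m:ℝ) ^ σ ≠ 0 := (Real.rpow_pos_of_pos hm0 σ).ne'
      rw [Real.mul_rpow hd0.le hm0.le, Real.rpow_sub hd0, Real.rpow_one,
        show -(σ - 1 + 1) = -σ by ring, Real.rpow_neg hm0.le]
      field_simp
    rw [Finset.sum_congr rfl e, ← Finset.mul_sum]
    have hs := inner_aux (β := σ - 1) hβ hd1 n
    have hnn : (0:ℝ) ≤ (d:ℝ) ^ (1 - σ) := Real.rpow_nonneg hd0.le _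
    calc (d:ℝ) ^ (1 - σ) * ∑ m ∈ Finset.Icc d n, (m : ℝ) ^ (-(σ - 1 + 1))
        ≤ (d:ℝ) ^ (1 - σ) * ((d:ℝ) ^ (-(σ - 1 + 1)) + (d:ℝ) ^ (-(σ - 1)) / (σ - 1)) :=
          mul_le_mul_of_nonneg_left hs hnn
      _ = (d : ℝ) ^ (1 - 2*σ) + (d : ℝ) ^ (2 - 2*σ) / (σ - 1) := by
          rw [mul_add, ← mul_div_assoc, ← Real.rpow_add hd0, ← Real.rpow_add hd0]
          congr 2 <;> ring
  refine le_trans (Finset.sum_le_sum hinner) ?_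
  rw [Finset.sum_add_distrib, ← Finset.sum_div]
  have hA : ∑ d ∈ Finset.Icc 1 n, (d:ℝ) ^ (1 - 2*σ) ≤ 1 + 1 / (2*σ - 2) := by
    have e : ∀ d ∈ Finset.Icc 1 n, (d:ℝ) ^ (1 - 2*σ) = (d:ℝ) ^ (-(2*σ - 2 + 1)) := by
      intro d _; congr 1; ring
    rw [Finset.sum_congr rfl e]
    have := inner_aux (β := 2*σ - 2) hβ' (le_refl 1) n
    simpa [Real.one_rpow] using this
  have hB : ∑ d ∈ Finset.Icc 1 n, (d:ℝ) ^ (2 - 2*σ) ≤ Z := by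
    have e : ∀ d ∈ Finset.Icc 1 n, (d:ℝ) ^ (2 - 2*σ) = (d:ℝ) ^ (-(2*(σ-1))) := by
      intro d _; congr 1; ring
    rw [Finset.sum_congr rfl e]
    exact zetaRe_aux hx n
  have hZ1 : (1:ℝ) ≤ Z := by
    have h := zetaRe_aux hx 1
    simp only [Finset.Icc_self, Finset.sum_singleton, Nat.cast_one, Real.one_rpow] at h
    exact h
  have ha : (0:ℝ) < 2 - σ := by linarith
  have hsum2 : (∑ d ∈ Finset.Icc 1 n, (d:ℝ) ^ (2 - 2*σ)) / (σ - 1) ≤ Z / (2 - σ) := by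
    have h0 : (0:ℝ) ≤ ∑ d ∈ Finset.Icc 1 n, (d:ℝ) ^ (2 - 2*σ) :=
      Finset.sum_nonneg fun d _ => Real.rpow_nonneg (Nat.cast_nonneg d) _
    calc (∑ d ∈ Finset.Icc 1 n, (d:ℝ) ^ (2 - 2*σ)) / (σ - 1) ≤ Z / (σ - 1) :=
          (div_le_div_iff_of_pos_right hβ).mpr hB
      _ ≤ Z / (2 - σ) := by
          apply div_le_div_of_nonneg_left (by linarith) ha (by linarith)
  have h1 : 1 + 1 / (2*σ - 2) ≤ 1 / (2 - σ) := by
    rw [← sub_nonneg]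
    have heq : 1/(2-σ) - (1 + 1/(2*σ-2)) = (σ*(2*σ-3))/((2-σ)*(2*σ-2)) := by
      field_simp; ring
    rw [heq]
    apply div_nonneg (by nlinarith) (by positivity)
  have hfin : (Z + 1) / (2 - σ) = Z / (2 - σ) + 1 / (2 - σ) := add_div Z 1 (2 - σ)
  linarith
end

section
/- For every real σ > 2, the series ∑_{n=1}^{∞} a(n)/n^{σ} converges and satisfies ζ(2σ−1)·ζ(σ) ≤ ∑_{n=1}^{∞} a(n)/n^{σ} ≤ ζ(σ−1), where ζ denotes the Riemann zeta function. -/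
lemma smallDivSum_le (n : ℕ) : smallDivSum n ≤ n := by
  have h1 : smallDivSum n ≤ ∑ d ∈ Finset.range (Nat.sqrt n + 1), d := by
    apply Finset.sum_le_sum_of_subset
    intro d hd
    simp only [Finset.mem_filter, Nat.mem_divisors] at hd
    have hd2 : d * d ≤ n := by nlinarith [hd.2]
    have : d ≤ Nat.sqrt n := Nat.le_sqrt.2 hd2
    simp only [Finset.mem_range]; omega
  have h2 : (∑ i ∈ Finset.range (Nat.sqrt n + 1), i) * 2 = (Nat.sqrt n + 1) * Nat.sqrt n := by
    simpa using Finset.sum_range_id_mul_two (Nat.sqrt n + 1)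
  have h3 := Nat.sqrt_le_self n
  have h4 := Nat.sqrt_le' n
  nlinarith [h1, h2, h3, h4]

lemma zetaRe (x : ℝ) (hx : 1 < x) :
    (riemannZeta (x : ℂ)).re = ∑' n : ℕ, 1 / (n : ℝ) ^ x := by
  rw [zeta_eq_tsum_one_div_nat_cpow (by simpa using hx)]
  have : ∀ n : ℕ, (1 / (n : ℂ) ^ (x : ℂ)) = ((1 / (n : ℝ) ^ x : ℝ) : ℂ) := by
    intro n
    rw [show ((n : ℂ)) = (((n : ℝ)) : ℂ) by push_cast; ring,
      ← Complex.ofReal_cpow n.cast_nonneg]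
    push_cast; ring
  rw [tsum_congr this, ← Complex.ofReal_tsum, Complex.ofReal_re]

lemma shiftSum (p : ℝ) (hp : 1 < p) :
    ∑' n : ℕ, 1 / (n : ℝ) ^ p = ∑' d : ℕ, 1 / ((d + 1 : ℕ) : ℝ) ^ p := by
  have hs : Summable (fun n : ℕ => 1 / (n : ℝ) ^ p) := Real.summable_one_div_nat_rpow.2 hp
  rw [Summable.tsum_eq_zero_add hs]
  simp [Real.zero_rpow (by linarith : p ≠ 0)]

theorem smallDivSum_dirichlet_bounds (σ : ℝ) (hσ : 2 < σ) :
    Summable (fun n : ℕ => (smallDivSum n : ℝ) / (n : ℝ) ^ σ) ∧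
    (riemannZeta ((2 * σ - 1 : ℝ) : ℂ)).re * (riemannZeta (σ : ℂ)).re
      ≤ ∑' n : ℕ, (smallDivSum n : ℝ) / (n : ℝ) ^ σ ∧
    ∑' n : ℕ, (smallDivSum n : ℝ) / (n : ℝ) ^ σ ≤ (riemannZeta ((σ - 1 : ℝ) : ℂ)).re := by
  classical
  set G : ℕ → ℝ := fun n => (smallDivSum n : ℝ) / (n : ℝ) ^ σ with hGdef
  have hσ1 : (1 : ℝ) < σ := by linarith
  have hσ1' : (1 : ℝ) < σ - 1 := by linarith
  have h2σ : (1 : ℝ) < 2 * σ - 1 := by linarith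
  have hGnonneg : ∀ n, 0 ≤ G n := fun n => by positivity
  -- upper bound termwise
  have hGle : ∀ n : ℕ, G n ≤ 1 / (n : ℝ) ^ (σ - 1) := by
    intro n
    rcases Nat.eq_zero_or_pos n with rfl | hn
    · simp [hGdef, smallDivSum, Real.zero_rpow (by linarith : σ - 1 ≠ 0)]
    · have hn0 : (0 : ℝ) < n := by exact_mod_cast hn
      have hb : (smallDivSum n : ℝ) ≤ (n : ℝ) := by exact_mod_cast smallDivSum_le n
      have key : (n : ℝ) ^ σ = (n : ℝ) ^ (σ - 1) * (n : ℝ) := by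
        rw [show σ = (σ - 1) + 1 by ring] ; rw [Real.rpow_add hn0, Real.rpow_one]; ring_nf
      have hpow : (0 : ℝ) < (n : ℝ) ^ σ := Real.rpow_pos_of_pos hn0 σ
      have hpow' : (0 : ℝ) < (n : ℝ) ^ (σ - 1) := Real.rpow_pos_of_pos hn0 (σ - 1)
      have h1 : G n ≤ (n : ℝ) / (n : ℝ) ^ σ := by
        simp only [hGdef]; gcongr
      calc G n ≤ (n : ℝ) / (n : ℝ) ^ σ := h1
        _ = 1 / (n : ℝ) ^ (σ - 1) := by rw [key]; field_simp
  have hZsum : Summable (fun n : ℕ => 1 / (n : ℝ) ^ (σ - 1)) :=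
    Real.summable_one_div_nat_rpow.2 hσ1'
  have hGsum : Summable G := Summable.of_nonneg_of_le hGnonneg hGle hZsum
  refine ⟨hGsum, ?_, ?_⟩
  · -- lower bound
    set u : ℕ → ℝ := fun d => 1 / ((d + 1 : ℕ) : ℝ) ^ (2 * σ - 1) with hu
    set v : ℕ → ℝ := fun m => 1 / ((m + 1 : ℕ) : ℝ) ^ σ with hv
    have hus : Summable u := by
      have := (summable_nat_add_iff (f := fun n : ℕ => 1 / (n : ℝ) ^ (2 * σ - 1)) 1).2
        (Real.summable_one_div_nat_rpow.2 h2σ)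
      exact this
    have hvs : Summable v := by
      have := (summable_nat_add_iff (f := fun n : ℕ => 1 / (n : ℝ) ^ σ) 1).2
        (Real.summable_one_div_nat_rpow.2 hσ1)
      exact this
    have hun : 0 ≤ u := fun d => by positivity
    have hvn : 0 ≤ v := fun m => by positivity
    have huvs : Summable (fun p : ℕ × ℕ => u p.1 * v p.2) := hus.mul_of_nonneg hvs hun hvn
    -- the double-indexed version of G
    set H : ℕ × ℕ → ℝ := fun p =>
      if p.2 ∈ p.1.divisors ∧ p.2 ^ 2 ≤ p.1 then (p.2 : ℝ) / (p.1 : ℝ) ^ σ else 0 with hH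
    have hHnonneg : 0 ≤ H := by
      intro p; simp only [hH]
      split <;> positivity
    have hslice : ∀ n : ℕ, ∑' d : ℕ, H (n, d) = G n := by
      intro n
      have h0 : ∀ d ∉ n.divisors.filter (fun d => d ^ 2 ≤ n), H (n, d) = 0 := by
        intro d hd
        simp only [Finset.mem_filter] at hd
        simp only [hH, ite_eq_right_iff]
        intro hc; exact absurd hc (by tauto)
      rw [tsum_eq_sum h0]
      have : ∀ d ∈ n.divisors.filter (fun d => d ^ 2 ≤ n),
          H (n, d) = (d : ℝ) / (n : ℝ) ^ σ := by
        intro d hd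
        simp only [Finset.mem_filter] at hd
        simp only [hH, if_pos (And.intro hd.1 hd.2)]
      rw [Finset.sum_congr rfl this, ← Finset.sum_div]
      simp only [hGdef, smallDivSum]
      push_cast
      ring
    have hsliceS : ∀ n : ℕ, Summable (fun d => H (n, d)) := by
      intro n
      apply summable_of_ne_finset_zero (s := n.divisors.filter (fun d => d ^ 2 ≤ n))
      intro d hd
      simp only [Finset.mem_filter] at hd
      simp only [hH, ite_eq_right_iff]
      intro hc; exact absurd hc (by tauto)
    have hHsum : Summable H := by
      rw [summable_prod_of_nonneg hHnonneg]
      refine ⟨hsliceS, ?_⟩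
      simpa only [hslice] using hGsum
    have hHtsum : ∑' p : ℕ × ℕ, H p = ∑' n, G n := by
      rw [Summable.tsum_prod' hHsum hsliceS]
      exact tsum_congr hslice
    -- the injection
    set e : ℕ × ℕ → ℕ × ℕ := fun p => ((p.1 + 1) ^ 2 * (p.2 + 1), p.1 + 1) with he
    have heinj : Function.Injective e := by
      rintro ⟨a, b⟩ ⟨c, d⟩ h
      simp only [he, Prod.mk.injEq] at h
      obtain ⟨h1, h2⟩ := h
      have hac : a = c := by omega
      subst hac
      have : b = d := by
        have := Nat.eq_of_mul_eq_mul_left (show 0 < (a+1)^2 by positivity) h1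
        omega
      simp [this]
    have hterm : ∀ p : ℕ × ℕ, u p.1 * v p.2 = H (e p) := by
      rintro ⟨a, b⟩
      have hmem : (a + 1) ∈ ((a + 1) ^ 2 * (b + 1)).divisors := by
        rw [Nat.mem_divisors]
        exact ⟨⟨(a + 1) * (b + 1), by ring⟩, by positivity⟩
      have hle : (a + 1) ^ 2 ≤ (a + 1) ^ 2 * (b + 1) :=
        Nat.le_mul_of_pos_right _ (Nat.succ_pos b)
      simp only [hu, hv, hH, he, if_pos (And.intro hmem hle)]
      have hx : (0 : ℝ) < ((a + 1 : ℕ) : ℝ) := by positivity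
      have hy : (0 : ℝ) < ((b + 1 : ℕ) : ℝ) := by positivity
      have hcast : (((a + 1) ^ 2 * (b + 1) : ℕ) : ℝ)
          = ((a + 1 : ℕ) : ℝ) ^ (2 : ℕ) * ((b + 1 : ℕ) : ℝ) := by push_cast; ring
      rw [hcast, Real.mul_rpow (by positivity) hy.le, ← Real.rpow_natCast ((a+1:ℕ):ℝ) 2,
        ← Real.rpow_mul hx.le]
      have hsplit : ((a + 1 : ℕ) : ℝ) ^ ((2 : ℕ) * σ : ℝ)
          = ((a + 1 : ℕ) : ℝ) * ((a + 1 : ℕ) : ℝ) ^ (2 * σ - 1) := by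
        rw [show ((2 : ℕ) * σ : ℝ) = 1 + (2 * σ - 1) by push_cast; ring,
          Real.rpow_add hx, Real.rpow_one]
      rw [hsplit]
      have hp1 : (0 : ℝ) < ((a + 1 : ℕ) : ℝ) ^ (2 * σ - 1) := Real.rpow_pos_of_pos hx _
      have hp2 : (0 : ℝ) < ((b + 1 : ℕ) : ℝ) ^ σ := Real.rpow_pos_of_pos hy _
      field_simp
    calc (riemannZeta ((2 * σ - 1 : ℝ) : ℂ)).re * (riemannZeta (σ : ℂ)).re
        = (∑' d, u d) * (∑' m, v m) := by
          rw [zetaRe _ h2σ, zetaRe _ hσ1, shiftSum _ h2σ, shiftSum _ hσ1]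
      _ = ∑' p : ℕ × ℕ, u p.1 * v p.2 := Summable.tsum_mul_tsum hus hvs huvs
      _ ≤ ∑' p : ℕ × ℕ, H p := by
          refine Summable.tsum_le_tsum_of_inj e heinj (fun c _ => hHnonneg c)
            (fun p => le_of_eq (hterm p)) huvs hHsum
      _ = ∑' n, G n := hHtsum
  · -- upper bound
    calc ∑' n, G n ≤ ∑' n : ℕ, 1 / (n : ℝ) ^ (σ - 1) := Summable.tsum_le_tsum hGle hGsum hZsum
      _ = (riemannZeta ((σ - 1 : ℝ) : ℂ)).re := (zetaRe _ hσ1').symm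
end
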